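/- (Contour integral representation) Let 0 < q < 1, x ∈ [0,1], k, n ∈ ℕ, and let r > 0. Then (n!/(2πi)) · ∮_{|ξ|=r} ((ξ·[x]_q)^k / k!) · exp(ξ·[1−x]_q) · ξ^{−(n+1)} dξ = B_{k,n}(x; q), where the integral is the circle integral over the circle of radius r centered at the origin, traversed in the positive direction, and the real constants [x]_q, [1−x]_q are regarded as complex numbers. -/

import Mathlib

open Finset

/-- The `q`-number `[x]_q = (1 - q^x)/(1 - q)` (real exponent). -/
noncomputable def qnum (q x : ℝ) : ℝ := (1 - q ^ x) / (1 - q)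

/-- The modified `q`-Bernstein polynomial
`B_{k,n}(x;q) = C(n,k) [x]_q^k [1-x]_q^(n-k)`. -/
noncomputable def qBern (q : ℝ) (k n : ℕ) (x : ℝ) : ℝ :=
  (n.choose k : ℝ) * qnum q x ^ k * qnum q (1 - x) ^ (n - k)

open FormalMultilinearSeries in
/-- General contour-integral coefficient extraction for `(za)^k/k! · e^{zc}`. -/
theorem contour_aux (a c : ℂ) (k n : ℕ) (r : ℝ) (hr : 0 < r) :
    (n.factorial : ℂ) / (2 * Real.pi * Complex.I) *
      (∮ z in C(0, r),
        (z * a) ^ k / (k.factorial : ℂ) *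
          Complex.exp (z * c) * z ^ (-(n + 1 : ℤ))) =
      (n.choose k : ℂ) * a ^ k * c ^ (n - k) := by
  set f : ℂ → ℂ := fun z => (z * a) ^ k / (k.factorial : ℂ) * Complex.exp (z * c) with hf
  have hdiff : Differentiable ℂ f := by
    apply Differentiable.mul
    · exact (((differentiable_id.mul_const a).pow k).div_const _)
    · exact Complex.differentiable_exp.comp (differentiable_id.mul_const c)
  -- the explicit Taylor coefficients
  set co : ℕ → ℂ := fun m =>
    if k ≤ m then a ^ k / (k.factorial : ℂ) * (c ^ (m - k) / ((m - k).factorial : ℂ)) else 0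
    with hco
  have hcok : ∀ j : ℕ, co (j + k) = a ^ k / (k.factorial : ℂ) * (c ^ j / (j.factorial : ℂ)) := by
    intro j
    simp [hco, Nat.le_add_left]
  set R : NNReal := ⟨r, hr.le⟩ with hR
  have hRr : (R : ℝ) = r := rfl
  -- the explicit series
  set P : FormalMultilinearSeries ℂ ℂ ℂ := ofScalars ℂ co with hP
  have hsum_shift : ∀ z : ℂ, HasSum (fun j => co (j + k) * z ^ (j + k)) (f z) := by
    intro z
    have h1 : HasSum (fun j => (z * c) ^ j / (j.factorial : ℂ))
        (Complex.exp (z * c)) := by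
      rw [Complex.exp_eq_exp_ℂ]
      exact NormedSpace.expSeries_div_hasSum_exp (z * c)
    have h2 := h1.mul_left ((z * a) ^ k / (k.factorial : ℂ))
    convert h2 using 2 with j
    · rfl
    rw [hcok j]
    rw [pow_add, mul_pow, mul_pow]
    ring
  have hPsum : ∀ z : ℂ, HasSum (fun m => co m * z ^ m) (f z) := by
    intro z
    have := (hasSum_nat_add_iff (f := fun m => co m * z ^ m) k).mp (hsum_shift z)
    have hzero : ∑ i ∈ range k, co i * z ^ i = 0 := by
      apply Finset.sum_eq_zero
      intro i hi
      have : ¬ k ≤ i := by simpa using (Finset.mem_range.mp hi)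
      simp [hco, this]
    rwa [hzero, add_zero] at this
  have hball : HasFPowerSeriesOnBall f P 0 R := by
    refine ⟨?_, by exact_mod_cast hr, ?_⟩
    · apply P.le_radius_of_summable
      have : Summable (fun m => ‖co m‖ * r ^ m) := by
        rw [← summable_nat_add_iff k]
        have hbase : Summable (fun j : ℕ => (‖a‖ ^ k / (k.factorial : ℝ) * r ^ k)
            * ((‖c‖ * r) ^ j / (j.factorial : ℝ))) :=
          (Real.summable_pow_div_factorial (‖c‖ * r)).mul_left _
        apply hbase.congr
        intro j
        rw [hcok j]
        simp only [norm_mul, norm_div, norm_pow, Complex.norm_natCast]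
        rw [pow_add]
        ring
      apply this.congr
      intro m
      rw [ofScalars_norm]
      rfl
    · intro y _
      rw [zero_add]
      have := hPsum y
      apply this.congr fun s => ?_
      apply Finset.sum_congr rfl
      intro m _
      simp only [hP, ofScalars_apply_eq, smul_eq_mul]
  -- Cauchy power series agrees with P
  have hcauchy : HasFPowerSeriesOnBall f (cauchyPowerSeries f 0 r) 0 ⊤ := by
    have := hdiff.hasFPowerSeriesOnBall (0 : ℂ) (R := R) (by exact_mod_cast hr)
    rwa [hRr] at this
  have heq : cauchyPowerSeries f 0 r = P :=
    hcauchy.hasFPowerSeriesAt.eq_formalMultilinearSeries hball.hasFPowerSeriesAt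
  -- extract the coefficient formula
  have hcoeff : (cauchyPowerSeries f 0 r n fun _ => (1 : ℂ)) = co n := by
    rw [heq, hP, ofScalars_apply_eq, one_pow, smul_eq_mul, mul_one]
  rw [cauchyPowerSeries_apply] at hcoeff
  -- rewrite integrand
  have hint : (∮ z in C(0, r),
        (z * a) ^ k / (k.factorial : ℂ) * Complex.exp (z * c) * z ^ (-(n + 1 : ℤ))) =
      ∮ z in C(0, r), ((1 : ℂ) / (z - 0)) ^ n • (z - 0)⁻¹ • f z := by
    apply circleIntegral.integral_congr hr.le
    intro z hz
    have hz0 : z ≠ 0 := by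
      intro h
      rw [h] at hz
      simp only [Metric.mem_sphere, dist_self] at hz
      exact hr.ne hz
    simp only [sub_zero, smul_eq_mul, one_div, hf]
    rw [show (-(n + 1 : ℤ)) = -((n : ℤ) + 1) by push_cast; ring]
    rw [zpow_neg, zpow_add_one₀ hz0, zpow_natCast, mul_inv, inv_pow]
    ring
  rw [hint]
  have h2pi : (2 * (Real.pi : ℂ) * Complex.I) ≠ 0 := by
    simp [Real.pi_ne_zero, Complex.I_ne_zero]
  rw [smul_eq_mul] at hcoeff
  have key : (∮ z in C(0, r), ((1 : ℂ) / (z - 0)) ^ n • (z - 0)⁻¹ • f z)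
      = (2 * (Real.pi : ℂ) * Complex.I) * co n := by
    rw [← hcoeff]
    field_simp
  rw [key]
  rw [show (n.factorial : ℂ) / (2 * (Real.pi : ℂ) * Complex.I) *
      (2 * (Real.pi : ℂ) * Complex.I * co n) = (n.factorial : ℂ) * co n from by
    field_simp]
  -- finish: n! * co n = choose * a^k * c^(n-k)
  by_cases hkn : k ≤ n
  · have hchoose := Nat.choose_mul_factorial_mul_factorial hkn
    simp only [hco, if_pos hkn]
    have hk0 : ((k.factorial : ℂ)) ≠ 0 := Nat.cast_ne_zero.mpr k.factorial_ne_zero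
    have hnk0 : (((n - k).factorial : ℂ)) ≠ 0 := Nat.cast_ne_zero.mpr (n - k).factorial_ne_zero
    have : (n.factorial : ℂ) = (n.choose k : ℂ) * (k.factorial : ℂ) * ((n - k).factorial : ℂ) := by
      exact_mod_cast hchoose.symm
    rw [this]
    field_simp
  · push_neg at hkn
    simp [hco, Nat.choose_eq_zero_of_lt hkn, not_le.mpr hkn]

/-- Contour integral representation of the modified `q`-Bernstein polynomials:
`(n!/(2πi)) ∮_{|ξ|=r} ((ξ[x]_q)^k/k!) e^{ξ[1−x]_q} ξ^{−(n+1)} dξ = B_{k,n}(x;q)`. -/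
theorem modified_qBernstein_contour_integral
    (q : ℝ) (hq0 : 0 < q) (hq1 : q < 1)
    (x : ℝ) (hx : x ∈ Set.Icc (0 : ℝ) 1) (k n : ℕ) (r : ℝ) (hr : 0 < r) :
    (n.factorial : ℂ) / (2 * Real.pi * Complex.I) *
      (∮ z in C(0, r),
        (z * (qnum q x : ℂ)) ^ k / (k.factorial : ℂ) *
          Complex.exp (z * (qnum q (1 - x) : ℂ)) * z ^ (-(n + 1 : ℤ))) =
      (qBern q k n x : ℂ) := by
  rw [contour_aux (qnum q x : ℂ) (qnum q (1 - x) : ℂ) k n r hr]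
  rw [qBern]
  push_cast
  ring
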